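/- If n is an odd perfect number with exactly 17 distinct prime factors, then the smallest prime factor of n is at most 17, the second smallest prime factor is at most 53, and the third smallest prime factor is at most 1093. -/

import Mathlib

open Finset

private lemma geom_nat (p : ℕ) (hp : 1 ≤ p) :
    ∀ m : ℕ, (∑ k ∈ Finset.range m, p ^ k) * (p - 1) = p ^ m - 1 := by
  intro m
  induction m with
  | zero => simp
  | succ m ih =>
    rw [Finset.sum_range_succ, add_mul, ih, Nat.mul_sub, pow_succ]
    have h1 : 1 ≤ p ^ m := Nat.one_le_pow _ _ hp
    have h2 : p ^ m ≤ p ^ m * p := Nat.le_mul_of_pos_right _ hp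
    omega

private lemma key_nat (n : ℕ) (hn : Nat.Perfect n) (hne : n.primeFactors.Nonempty) :
    2 * (n * ∏ p ∈ n.primeFactors, (p - 1)) < n * ∏ p ∈ n.primeFactors, p := by
  have hn0 : n ≠ 0 := by have := hn.2; omega
  have hσ : ∑ d ∈ n.divisors, d = 2 * n :=
    (Nat.perfect_iff_sum_divisors_eq_two_mul hn.2).mp hn
  have hfac : ∑ d ∈ n.divisors, d
      = ∏ p ∈ n.primeFactors, ∑ k ∈ Finset.range (n.factorization p + 1), p ^ k :=
    Nat.sum_divisors hn0
  have hnprod : n = ∏ p ∈ n.primeFactors, p ^ n.factorization p := by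
    conv_lhs => rw [← Nat.factorization_prod_pow_eq_self hn0]
    rw [Finsupp.prod, Nat.support_factorization]
  have hprime : ∀ p ∈ n.primeFactors, p.Prime := fun p hp => Nat.prime_of_mem_primeFactors hp
  calc 2 * (n * ∏ p ∈ n.primeFactors, (p - 1))
      = (2 * n) * ∏ p ∈ n.primeFactors, (p - 1) := by ring
    _ = (∏ p ∈ n.primeFactors, ∑ k ∈ Finset.range (n.factorization p + 1), p ^ k)
        * ∏ p ∈ n.primeFactors, (p - 1) := by rw [← hσ, hfac]
    _ = ∏ p ∈ n.primeFactors, (p ^ (n.factorization p + 1) - 1) := by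
        rw [← Finset.prod_mul_distrib]
        exact Finset.prod_congr rfl fun p hp =>
          geom_nat p (hprime p hp).one_lt.le _
    _ < ∏ p ∈ n.primeFactors, p ^ (n.factorization p + 1) := by
        refine Finset.prod_lt_prod_of_nonempty (fun p hp => ?_) (fun p hp => ?_) hne
        · have h2 : 2 ≤ p := (hprime p hp).two_le
          have : 2 ≤ p ^ (n.factorization p + 1) :=
            le_trans h2 (Nat.le_self_pow (by omega) p)
          omega
        · have : 0 < p ^ (n.factorization p + 1) := pow_pos (hprime p hp).pos _
          omega
    _ = (∏ p ∈ n.primeFactors, p ^ n.factorization p) * ∏ p ∈ n.primeFactors, p := by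
        rw [← Finset.prod_mul_distrib]
        exact Finset.prod_congr rfl fun p hp => by rw [pow_succ]
    _ = n * ∏ p ∈ n.primeFactors, p := by rw [← hnprod]

private def gq (x : ℕ) : ℚ := x / (x - 1)

private lemma key_rat (n : ℕ) (hkn : 2 * (n * ∏ p ∈ n.primeFactors, (p - 1)) < n * ∏ p ∈ n.primeFactors, p)
    (hn0 : n ≠ 0) :
    (2 : ℚ) < ∏ p ∈ n.primeFactors, gq p := by
  have hprime : ∀ p ∈ n.primeFactors, 2 ≤ p := fun p hp => (Nat.prime_of_mem_primeFactors hp).two_le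
  have hlt : 2 * ∏ p ∈ n.primeFactors, (p - 1) < ∏ p ∈ n.primeFactors, p := by
    have hn1 : 1 ≤ n := Nat.one_le_iff_ne_zero.mpr hn0
    have := hkn
    nlinarith [Nat.pos_of_ne_zero hn0]
  have hden : (0:ℚ) < ∏ p ∈ n.primeFactors, ((p:ℚ) - 1) := by
    apply Finset.prod_pos
    intro p hp
    have := hprime p hp
    have : (2:ℚ) ≤ p := by exact_mod_cast this
    linarith
  have heq : ∏ p ∈ n.primeFactors, gq p
      = (∏ p ∈ n.primeFactors, (p:ℚ)) / ∏ p ∈ n.primeFactors, ((p:ℚ) - 1) := by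
    rw [← Finset.prod_div_distrib]
    rfl
  rw [heq, lt_div_iff₀ hden]
  have hcast : ∏ p ∈ n.primeFactors, ((p:ℚ) - 1) = ((∏ p ∈ n.primeFactors, (p-1) : ℕ) : ℚ) := by
    push_cast
    apply Finset.prod_congr rfl
    intro p hp
    have := hprime p hp
    rw [Nat.cast_sub (by omega)]
    norm_num
  rw [hcast]
  have : ((2 * ∏ p ∈ n.primeFactors, (p - 1) : ℕ) : ℚ) < ((∏ p ∈ n.primeFactors, p : ℕ) : ℚ) := by
    exact_mod_cast hlt
  push_cast at this ⊢
  linarith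

private lemma list_prod_idx (f : ℕ → ℚ) : ∀ l : List ℕ,
    (l.map f).prod = ∏ i ∈ Finset.range l.length, f l[i]! := by
  intro l
  induction l with
  | nil => simp
  | cons x l ih =>
    rw [List.map_cons, List.prod_cons, ih, List.length_cons, Finset.prod_range_succ']
    simp [mul_comm]


private lemma odd_gap {x y : ℕ} (hx : Odd x) (hy : Odd y) (h : x < y) : x + 2 ≤ y := by
  rcases hx with ⟨a, ha⟩
  rcases hy with ⟨b, hb⟩
  omega



/-- If `n` is an odd perfect number with exactly 17 distinct prime factors, then its
smallest prime factor is at most 17, its second smallest prime factor is at most 53,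
and its third smallest prime factor is at most 1093. -/
theorem opn_seventeen_factors_bounds (n : ℕ) (hn : Nat.Perfect n) (hodd : Odd n)
    (hω : n.primeFactors.card = 17) :
    n.minFac ≤ 17 ∧ (Finset.sort n.primeFactors (· ≤ ·))[1]! ≤ 53 ∧
      (Finset.sort n.primeFactors (· ≤ ·))[2]! ≤ 1093 := by
  have hn0 : n ≠ 0 := by have := hn.2; omega
  have hne : n.primeFactors.Nonempty := Finset.card_pos.mp (by rw [hω]; norm_num)
  have keyQ : (2:ℚ) < ∏ p ∈ n.primeFactors, gq p := key_rat n (key_nat n hn hne) hn0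
  set S := n.primeFactors with hS
  set l := Finset.sort S (· ≤ ·) with hl
  have hlen : l.length = 17 := by rw [hl, Finset.length_sort, hω]
  set a : ℕ → ℕ := fun i => l[i]! with ha
  -- membership
  have hmem : ∀ i, i < 17 → a i ∈ S := by
    intro i hi
    have hi' : i < l.length := by omega
    rw [ha]
    simp only
    rw [getElem!_pos l i hi']
    exact (Finset.mem_sort (· ≤ ·)).mp (l.getElem_mem hi')
  have hprime : ∀ i, i < 17 → (a i).Prime := fun i hi =>
    Nat.prime_of_mem_primeFactors (hmem i hi)
  have hoddp : ∀ i, i < 17 → Odd (a i) := by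
    intro i hi
    have hp := hprime i hi
    refine hp.odd_of_ne_two ?_
    intro h2
    have hdvd : 2 ∣ n := h2 ▸ Nat.dvd_of_mem_primeFactors (hmem i hi)
    rw [Nat.odd_iff] at hodd
    omega
  have h3 : ∀ i, i < 17 → 3 ≤ a i := by
    intro i hi
    have := (hprime i hi).two_le
    have := hoddp i hi
    rw [Nat.odd_iff] at this
    omega
  -- strict monotone
  have hstrict : ∀ i j, i < j → j < 17 → a i < a j := by
    intro i j hij hj
    have hi' : i < l.length := by omega
    have hj' : j < l.length := by omega
    have hsort : l.SortedLT := Finset.sortedLT_sort S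
    have := hsort (show (⟨i, hi'⟩ : Fin l.length) < ⟨j, hj'⟩ by simpa [Fin.lt_def])
    rw [ha]; simp only
    rw [getElem!_pos l i hi', getElem!_pos l j hj']
    simpa using this
  -- gap chain
  have hchain : ∀ k j, j + k < 17 → a j + 2 * k ≤ a (j + k) := by
    intro k
    induction k with
    | zero => intro j _; simp
    | succ k ih =>
      intro j hjk
      have h1 := ih j (by omega)
      have h2 : a (j + k) + 2 ≤ a (j + k + 1) :=
        odd_gap (hoddp _ (by omega)) (hoddp _ (by omega)) (hstrict _ _ (by omega) (by omega))
      have : j + (k+1) = j + k + 1 := by omega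
      rw [this]
      omega
  -- product over range
  have hprodl : ∏ p ∈ S, gq p = ∏ i ∈ Finset.range 17, gq (a i) := by
    have hperm : l.Perm S.toList := Finset.sort_perm_toList (r := (· ≤ ·)) S
    have h1 : (l.map gq).prod = (S.toList.map gq).prod := (hperm.map gq).prod_eq
    have h2 : (S.toList.map gq).prod = ∏ p ∈ S, gq p := Finset.prod_map_toList S gq
    have h3 : (l.map gq).prod = ∏ i ∈ Finset.range l.length, gq l[i]! := list_prod_idx gq l
    rw [← h2, ← h1, h3, hlen]
  rw [hprodl] at keyQ
  have hbound : ∀ (b : ℕ → ℕ), (∀ i, i < 17 → 2 ≤ b i ∧ b i ≤ a i) →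
      ∏ i ∈ Finset.range 17, gq (a i) ≤ ∏ i ∈ Finset.range 17, gq (b i) := by
    intro b hb
    apply Finset.prod_le_prod
    · intro i hi
      rw [Finset.mem_range] at hi
      exact le_of_lt (by
        have h1 : (1:ℚ) < a i := by exact_mod_cast lt_of_lt_of_le (by norm_num) (h3 i hi)
        exact div_pos (by linarith) (by linarith))
    · intro i hi
      rw [Finset.mem_range] at hi
      obtain ⟨hb2, hba⟩ := hb i hi
      -- gq anti
      have h1 : (1:ℚ) < b i := by exact_mod_cast hb2
      have h2 : (b i : ℚ) ≤ a i := by exact_mod_cast hba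
      unfold gq
      rw [div_le_div_iff₀ (by linarith) (by linarith)]
      nlinarith
  refine ⟨?_, ?_, ?_⟩
  · by_contra h
    push_neg at h
    have hminle : n.minFac ≤ a 0 :=
      Nat.minFac_le_of_dvd (hprime 0 (by omega)).two_le (Nat.dvd_of_mem_primeFactors (hmem 0 (by omega)))
    have h0 : 19 ≤ a 0 := by
      have := hoddp 0 (by omega)
      rw [Nat.odd_iff] at this
      omega
    have hble : ∀ i, i < 17 → 2 ≤ 19 + 2*i ∧ 19 + 2*i ≤ a i := by
      intro i hi
      refine ⟨by omega, ?_⟩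
      have := hchain i 0 (by omega)
      rw [Nat.zero_add] at this
      omega
    have := hbound (fun i => 19 + 2*i) hble
    have hnum : ∏ i ∈ Finset.range 17, gq (19 + 2*i) < 2 := by
      norm_num [gq, Finset.prod_range_succ]
    linarith
  · by_contra h
    push_neg at h
    have h1 : 55 ≤ a 1 := by
      have := hoddp 1 (by omega)
      rw [Nat.odd_iff] at this
      have h' : 53 < a 1 := by have : a 1 = l[1]! := rfl; rw [this]; exact h
      omega
    have hble : ∀ i, i < 17 → 2 ≤ (if i = 0 then 3 else 53 + 2*i) ∧
        (if i = 0 then 3 else 53 + 2*i) ≤ a i := by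
      intro i hi
      rcases Nat.eq_zero_or_pos i with h0 | h0
      · subst h0; exact ⟨by norm_num, by simpa using h3 0 (by omega)⟩
      · have hne : i ≠ 0 := by omega
        simp only [hne, if_false]
        refine ⟨by omega, ?_⟩
        have := hchain (i - 1) 1 (by omega)
        have heq : 1 + (i - 1) = i := by omega
        rw [heq] at this
        omega
    have := hbound _ hble
    have hnum : ∏ i ∈ Finset.range 17, gq (if i = 0 then 3 else 53 + 2*i) < 2 := by
      norm_num [gq, Finset.prod_range_succ]
    linarith
  · by_contra h
    push_neg at h
    have h2b : 1095 ≤ a 2 := by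
      have := hoddp 2 (by omega)
      rw [Nat.odd_iff] at this
      have h' : 1093 < a 2 := by have : a 2 = l[2]! := rfl; rw [this]; exact h
      omega
    have h1b : 5 ≤ a 1 := by
      have := h3 0 (by omega)
      have := hstrict 0 1 (by omega) (by omega)
      have := hoddp 1 (by omega)
      rw [Nat.odd_iff] at this
      omega
    have hble : ∀ i, i < 17 → 2 ≤ (if i = 0 then 3 else if i = 1 then 5 else 1091 + 2*i) ∧
        (if i = 0 then 3 else if i = 1 then 5 else 1091 + 2*i) ≤ a i := by
      intro i hi
      rcases Nat.lt_or_ge i 2 with h0 | h0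
      · interval_cases i
        · exact ⟨by norm_num, by simpa using h3 0 (by omega)⟩
        · exact ⟨by norm_num, by simpa using h1b⟩
      · have hne0 : i ≠ 0 := by omega
        have hne1 : i ≠ 1 := by omega
        simp only [hne0, hne1, if_false]
        refine ⟨by omega, ?_⟩
        have := hchain (i - 2) 2 (by omega)
        have heq : 2 + (i - 2) = i := by omega
        rw [heq] at this
        omega
    have := hbound _ hble
    have hnum : ∏ i ∈ Finset.range 17,
        gq (if i = 0 then 3 else if i = 1 then 5 else 1091 + 2*i) < 2 := by
      norm_num [gq, Finset.prod_range_succ]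
    linarith
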